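/- For the function f : ℝ² → ℝ given by f(x₁,x₂) = |x₂ − x₁^{4/3}|^{3/2} (i.e. |x₂ − ∛(x₁⁴)|^{3/2}), the point (0,0) is a global minimizer with ∇f(0,0) = (0,0), for every unit vector v ∈ ℝ² there exist δ > 0 and C > 0 with f(tv) > Ct² for all t ∈ (0,δ), yet (0,0) is not a strict local minimizer (f vanishes along the curve x₂ = x₁^{4/3}), and f is not ℓ-stable at (0,0). -/

import Mathlib

open Filter Topology

/-- The space of continuous `m`-linear forms `L^m(E)`. -/
abbrev MForm (E : Type*) [NormedAddCommGroup E] [InnerProductSpace ℝ E] (m : ℕ) : Type _ :=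
  ContinuousMultilinearMap ℝ (fun _ : Fin m => E) ℝ

/-- A tuple of multilinear forms `(x₁*, …, x_k*)`, where `x_i*` is an `i`-linear form. -/
abbrev FormTuple (E : Type*) [NormedAddCommGroup E] [InnerProductSpace ℝ E] (k : ℕ) : Type _ :=
  ∀ i : Fin k, MForm E (i.1 + 1)

/-- Restriction of a tuple of forms to its first `m` entries. -/
def FormTuple.restrict {E : Type*} [NormedAddCommGroup E] [InnerProductSpace ℝ E] {k : ℕ}
    (xs : FormTuple E k) (m : ℕ) (h : m ≤ k) : FormTuple E m :=
  fun j => xs ⟨j.1, lt_of_lt_of_le j.2 h⟩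

/-- The lower Hadamard directional derivative of order `k + 1` of `f` at `x`
with parameters `xs = (x₁*, …, x_k*)` in direction `u`:
`liminf_{t↓0, u'→u} (k+1)!/t^(k+1) * (f (x + t u') - f x - ∑_{i=1}^{k} t^i/i! · x_i*(u',…,u'))`. -/
noncomputable def hadamardDeriv {E : Type*} [NormedAddCommGroup E] [InnerProductSpace ℝ E]
    (f : E → EReal) (x : E) (k : ℕ) (xs : FormTuple E k) (u : E) : EReal :=
  Filter.liminf
    (fun p : ℝ × E =>
      (((Nat.factorial (k + 1) : ℝ) / p.1 ^ (k + 1) : ℝ) : EReal) *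
        (f (x + p.1 • p.2) - f x -
          ((∑ i : Fin k, p.1 ^ (i.1 + 1) / (Nat.factorial (i.1 + 1)) * xs i (fun _ => p.2) : ℝ) :
            EReal)))
    ((𝓝[>] (0 : ℝ)) ×ˢ 𝓝 u)

/-- The lower Hadamard subdifferential of order `k + 1` of `f` at `x`
with parameters `xs = (x₁*, …, x_k*)`. -/
def hadamardSubdiff {E : Type*} [NormedAddCommGroup E] [InnerProductSpace ℝ E]
    (f : E → EReal) (x : E) (k : ℕ) (xs : FormTuple E k) : Set (MForm E (k + 1)) :=
  {y | ∀ u : E, ((y (fun _ => u) : ℝ) : EReal) ≤ hadamardDeriv f x k xs u}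

/-- The lower Dini directional derivative `D₋ f (x; u) = liminf_{t↓0} (f (x+tu) - f x)/t`. -/
noncomputable def diniLower {E : Type*} [NormedAddCommGroup E] [InnerProductSpace ℝ E]
    (f : E → EReal) (x u : E) : EReal :=
  Filter.liminf (fun t : ℝ => ((t⁻¹ : ℝ) : EReal) * (f (x + t • u) - f x)) (𝓝[>] (0 : ℝ))

/-- `f` is `ℓ`-stable at `xbar`: on some neighborhood `U` of `xbar` the lower Dini
derivatives satisfy `|D₋f (y; u) - D₋f (xbar; u)| ≤ K ‖y - xbar‖ ‖u‖` for `y ∈ U ∩ dom f`. -/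
def IsEllStable {E : Type*} [NormedAddCommGroup E] [InnerProductSpace ℝ E]
    (f : E → EReal) (xbar : E) : Prop :=
  ∃ U ∈ 𝓝 xbar, ∃ K > (0 : ℝ), ∀ y ∈ U, f y ≠ ⊤ → ∀ u : E,
    diniLower f y u - diniLower f xbar u ≤ ((K * ‖y - xbar‖ * ‖u‖ : ℝ) : EReal) ∧
    diniLower f xbar u - diniLower f y u ≤ ((K * ‖y - xbar‖ * ‖u‖ : ℝ) : EReal)

/-- The function `f (x₁, x₂) = |x₂ - ∛(x₁⁴)| ^ (3/2)`. -/
noncomputable def fEx16 : EuclideanSpace ℝ (Fin 2) → ℝ := fun x =>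
  |x 1 - ((x 0) ^ 4) ^ ((1 : ℝ) / 3)| ^ ((3 : ℝ) / 2)

lemma coord_le (x : EuclideanSpace ℝ (Fin 2)) (i : Fin 2) : |x i| ≤ ‖x‖ := by
  rw [EuclideanSpace.norm_eq, show |x i| = Real.sqrt ((x i)^2) from (Real.sqrt_sq_eq_abs _).symm]
  apply Real.sqrt_le_sqrt
  calc (x i)^2 = ‖x i‖^2 := by rw [Real.norm_eq_abs, sq_abs]
    _ ≤ ∑ j, ‖x j‖^2 := Finset.single_le_sum (f := fun j => ‖x j‖^2)
        (fun j _ => sq_nonneg _) (Finset.mem_univ i)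

lemma quarticroot (x : ℝ) : ((x^4) ^ ((1:ℝ)/3)) = |x| ^ ((4:ℝ)/3) := by
  rw [show (x^4 : ℝ) = |x|^(4:ℕ) by rw [← abs_pow, abs_of_nonneg (by positivity)],
    ← Real.rpow_natCast |x| 4, ← Real.rpow_mul (abs_nonneg x)]
  norm_num

lemma fzero : fEx16 0 = 0 := by
  simp only [fEx16]
  norm_num [Real.zero_rpow]

lemma fnonneg (x : EuclideanSpace ℝ (Fin 2)) : 0 ≤ fEx16 x :=
  Real.rpow_nonneg (abs_nonneg _) _

lemma fbound (x : EuclideanSpace ℝ (Fin 2)) (h : ‖x‖ ≤ 1) :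
    fEx16 x ≤ 2 ^ ((3:ℝ)/2) * ‖x‖ ^ ((3:ℝ)/2) := by
  rcases eq_or_lt_of_le (norm_nonneg x) with h0 | h0
  · have hx : x = 0 := by simpa using h0.symm
    simp [hx, fzero, ← h0, Real.zero_rpow (by norm_num : ((3:ℝ)/2) ≠ 0)]
  · have h1 : |x 1 - ((x 0)^4) ^ ((1:ℝ)/3)| ≤ 2 * ‖x‖ := by
      rw [quarticroot]
      have a1 : |x 1| ≤ ‖x‖ := coord_le x 1
      have a0 : |x 0| ^ ((4:ℝ)/3) ≤ ‖x‖ ^ ((4:ℝ)/3) :=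
        Real.rpow_le_rpow (abs_nonneg _) (coord_le x 0) (by norm_num)
      have a2 : ‖x‖ ^ ((4:ℝ)/3) ≤ ‖x‖ :=
        calc ‖x‖ ^ ((4:ℝ)/3) ≤ ‖x‖ ^ ((1:ℝ)) :=
            Real.rpow_le_rpow_of_exponent_ge h0 h (by norm_num)
          _ = ‖x‖ := Real.rpow_one _
      calc |x 1 - (|x 0|) ^ ((4:ℝ)/3)| ≤ |x 1| + |(|x 0|) ^ ((4:ℝ)/3)| := abs_sub _ _
        _ ≤ ‖x‖ + ‖x‖ := by
            rw [abs_of_nonneg (Real.rpow_nonneg (abs_nonneg _) _)]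
            exact add_le_add a1 (a0.trans a2)
        _ = 2 * ‖x‖ := by ring
    calc fEx16 x ≤ (2 * ‖x‖) ^ ((3:ℝ)/2) :=
        Real.rpow_le_rpow (abs_nonneg _) h1 (by norm_num)
      _ = 2 ^ ((3:ℝ)/2) * ‖x‖ ^ ((3:ℝ)/2) :=
        Real.mul_rpow (by norm_num) (norm_nonneg x)

lemma fderiv_zero_ex16 : fderiv ℝ fEx16 0 = 0 := by
  have H : HasFDerivAt fEx16 (0 : EuclideanSpace ℝ (Fin 2) →L[ℝ] ℝ) 0 := by
    rw [hasFDerivAt_iff_isLittleO_nhds_zero]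
    rw [Asymptotics.isLittleO_iff]
    intro c hc
    have hb : (0:ℝ) < min 1 ((c / 2 ^ ((3:ℝ)/2))^2) := by
      apply lt_min one_pos
      positivity
    filter_upwards [Metric.ball_mem_nhds 0 hb] with x hx
    rw [Metric.mem_ball, dist_zero_right] at hx
    have hx1 : ‖x‖ ≤ 1 := le_of_lt (lt_of_lt_of_le hx (min_le_left _ _))
    have hx2 : ‖x‖ ≤ (c / 2 ^ ((3:ℝ)/2))^2 := le_of_lt (lt_of_lt_of_le hx (min_le_right _ _))
    simp only [zero_add, fzero, ContinuousLinearMap.zero_apply, sub_zero]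
    rw [Real.norm_eq_abs, abs_of_nonneg (fnonneg x)]
    calc fEx16 x ≤ 2 ^ ((3:ℝ)/2) * ‖x‖ ^ ((3:ℝ)/2) := fbound x hx1
      _ = 2 ^ ((3:ℝ)/2) * (‖x‖ ^ ((1:ℝ)/2) * ‖x‖) := by
          rw [show ((3:ℝ)/2) = 1/2 + 1 by norm_num,
            Real.rpow_add' (norm_nonneg x) (by norm_num), Real.rpow_one]
      _ ≤ 2 ^ ((3:ℝ)/2) * ((c / 2 ^ ((3:ℝ)/2)) * ‖x‖) := by
          apply mul_le_mul_of_nonneg_left _ (by positivity)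
          apply mul_le_mul_of_nonneg_right _ (norm_nonneg x)
          calc ‖x‖ ^ ((1:ℝ)/2) ≤ ((c / 2 ^ ((3:ℝ)/2))^2) ^ ((1:ℝ)/2) :=
              Real.rpow_le_rpow (norm_nonneg x) hx2 (by norm_num)
            _ = c / 2 ^ ((3:ℝ)/2) := by
              rw [← Real.rpow_natCast (c / 2 ^ ((3:ℝ)/2)) 2, ← Real.rpow_mul (by positivity)]
              norm_num
      _ = c * ‖x‖ := by
          field_simp

  rw [H.fderiv]

lemma fcurve (x : EuclideanSpace ℝ (Fin 2)) (h : x 1 = ((x 0) ^ 4) ^ ((1 : ℝ) / 3)) :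
    fEx16 x = 0 := by
  simp only [fEx16, h, sub_self, abs_zero]
  exact Real.zero_rpow (by norm_num)

lemma fgrowth (v : EuclideanSpace ℝ (Fin 2)) (hv : ‖v‖ = 1) :
    ∃ δ > (0 : ℝ), ∃ C > (0 : ℝ), ∀ t : ℝ, 0 < t → t < δ → C * t ^ 2 < fEx16 (t • v) := by
  have key : ∀ t : ℝ, 0 < t →
      fEx16 (t • v) = |t * v 1 - t ^ ((4:ℝ)/3) * (|v 0|) ^ ((4:ℝ)/3)| ^ ((3:ℝ)/2) := by
    intro t ht
    have h1 : (t • v) 1 = t * v 1 := rfl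
    have h0 : (t • v) 0 = t * v 0 := rfl
    simp only [fEx16, h1, h0, quarticroot, abs_mul, abs_of_pos ht,
      Real.mul_rpow (le_of_lt ht) (abs_nonneg _)]
  by_cases hv1 : v 1 = 0
  · -- |v 0| = 1, f (t v) = t ^ 2
    have hv0 : |v 0| = 1 := by
      have := EuclideanSpace.norm_eq v
      rw [hv] at this
      have h2 : (1:ℝ) = Real.sqrt (‖v 0‖^2 + ‖v 1‖^2) := by
        rw [this]; congr 1
        rw [Fin.sum_univ_two]
      rw [hv1] at h2
      simp only [norm_zero, ne_eq, OfNat.ofNat_ne_zero, not_false_eq_true, zero_pow, add_zero,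
        Real.norm_eq_abs, Real.sqrt_sq_eq_abs, abs_abs] at h2
      exact h2.symm
    refine ⟨1, one_pos, 1/2, by norm_num, fun t ht ht1 => ?_⟩
    rw [key t ht, hv1, hv0, Real.one_rpow, mul_one, mul_zero, zero_sub, abs_neg,
      abs_of_nonneg (Real.rpow_nonneg (le_of_lt ht) _), ← Real.rpow_mul (le_of_lt ht)]
    have h2 : t ^ ((4:ℝ)/3 * (3/2)) = t^2 := by
      rw [show ((4:ℝ)/3 * (3/2)) = ((2:ℕ):ℝ) by norm_num, Real.rpow_natCast]
    rw [h2]; nlinarith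
  · -- v 1 ≠ 0
    have hv1' : 0 < |v 1| := abs_pos.mpr hv1
    have hv0le : |v 0| ≤ 1 := le_trans (coord_le v 0) (le_of_eq hv)
    set b : ℝ := (|v 1|/2) ^ ((3:ℝ)/2) with hb
    have hbpos : 0 < b := Real.rpow_pos_of_pos (by positivity) _
    refine ⟨min 1 ((|v 1|/2)^3), lt_min one_pos (by positivity), b, hbpos, fun t ht htδ => ?_⟩
    have ht1 : t < 1 := lt_of_lt_of_le htδ (min_le_left _ _)
    have ht2 : t < (|v 1|/2)^3 := lt_of_lt_of_le htδ (min_le_right _ _)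
    have hcube : t ^ ((1:ℝ)/3) ≤ |v 1|/2 := by
      calc t ^ ((1:ℝ)/3) ≤ ((|v 1|/2)^3) ^ ((1:ℝ)/3) :=
          Real.rpow_le_rpow (le_of_lt ht) (le_of_lt ht2) (by norm_num)
        _ = |v 1|/2 := by
          rw [← Real.rpow_natCast (|v 1|/2) 3, ← Real.rpow_mul (by positivity)]
          norm_num
    have hinner : t * |v 1| / 2 ≤ |t * v 1 - t ^ ((4:ℝ)/3) * (|v 0|) ^ ((4:ℝ)/3)| := by
      have h43 : t ^ ((4:ℝ)/3) = t * t ^ ((1:ℝ)/3) := by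
        rw [show ((4:ℝ)/3) = 1 + 1/3 by norm_num,
          Real.rpow_add' (le_of_lt ht) (by norm_num), Real.rpow_one]
      have hv043 : (|v 0|) ^ ((4:ℝ)/3) ≤ 1 :=
        Real.rpow_le_one (abs_nonneg _) hv0le (by norm_num)
      have habs : |t * v 1 - t ^ ((4:ℝ)/3) * (|v 0|) ^ ((4:ℝ)/3)| ≥
          |t * v 1| - |t ^ ((4:ℝ)/3) * (|v 0|) ^ ((4:ℝ)/3)| := abs_sub_abs_le_abs_sub _ _
      have h2 : |t ^ ((4:ℝ)/3) * (|v 0|) ^ ((4:ℝ)/3)| ≤ t * (|v 1|/2) := by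
        rw [abs_of_nonneg (by positivity), h43]
        calc t * t ^ ((1:ℝ)/3) * (|v 0|) ^ ((4:ℝ)/3) ≤ t * t ^ ((1:ℝ)/3) * 1 := by
              apply mul_le_mul_of_nonneg_left hv043 (by positivity)
          _ = t * t ^ ((1:ℝ)/3) := mul_one _
          _ ≤ t * (|v 1|/2) := mul_le_mul_of_nonneg_left hcube (le_of_lt ht)
      have h3 : |t * v 1| = t * |v 1| := by rw [abs_mul, abs_of_pos ht]
      linarith
    rw [key t ht]
    calc b * t^2 = b * t ^ ((2:ℝ)) := by rw [← Real.rpow_natCast t 2]; norm_num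
      _ < b * t ^ ((3:ℝ)/2) := by
          apply mul_lt_mul_of_pos_left _ hbpos
          exact Real.rpow_lt_rpow_of_exponent_gt ht ht1 (by norm_num)
      _ = (t * |v 1| / 2) ^ ((3:ℝ)/2) := by
          rw [hb, ← Real.mul_rpow (by positivity) (le_of_lt ht)]
          congr 1; ring
      _ ≤ |t * v 1 - t ^ ((4:ℝ)/3) * (|v 0|) ^ ((4:ℝ)/3)| ^ ((3:ℝ)/2) :=
          Real.rpow_le_rpow (by positivity) hinner (by norm_num)

noncomputable def curvePt (s : ℝ) : EuclideanSpace ℝ (Fin 2) :=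
  EuclideanSpace.single 0 s + EuclideanSpace.single 1 ((s ^ 4) ^ ((1:ℝ)/3))

lemma curvePt_apply0 (s : ℝ) : curvePt s 0 = s := by
  simp [curvePt, EuclideanSpace.single_apply]

lemma curvePt_apply1 (s : ℝ) : curvePt s 1 = (s ^ 4) ^ ((1:ℝ)/3) := by
  simp [curvePt, EuclideanSpace.single_apply]

lemma notstrict : ¬ (∀ᶠ x in 𝓝[≠] (0 : EuclideanSpace ℝ (Fin 2)), fEx16 0 < fEx16 x) := by
  intro h
  have hg : Tendsto (fun s : ℝ => (s^4) ^ ((1:ℝ)/3)) (𝓝 0) (𝓝 0) := by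
    have h1 : ContinuousAt (fun y : ℝ => y ^ ((1:ℝ)/3)) 0 :=
      Real.continuousAt_rpow_const 0 _ (Or.inr (by norm_num))
    have hc : ContinuousAt (fun s : ℝ => s^4) 0 := (continuous_pow 4).continuousAt
    have h2 := ContinuousAt.comp (g := fun y : ℝ => y ^ ((1:ℝ)/3))
      (f := fun s : ℝ => s^4) (x := 0) (by norm_num; exact h1) hc
    have h3 := h2.tendsto
    simpa [Real.zero_rpow, Function.comp_def] using h3
  have hnorm : Tendsto (fun s : ℝ => ‖curvePt s‖) (𝓝[>] (0:ℝ)) (𝓝 0) := by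
    apply squeeze_zero (fun s => norm_nonneg _)
      (g := fun s => |s| + |(s^4) ^ ((1:ℝ)/3)|)
    · intro s
      calc ‖curvePt s‖ ≤ ‖EuclideanSpace.single (0 : Fin 2) s‖ +
            ‖EuclideanSpace.single (1 : Fin 2) ((s^4) ^ ((1:ℝ)/3))‖ := norm_add_le _ _
        _ = |s| + |(s^4) ^ ((1:ℝ)/3)| := by
            rw [EuclideanSpace.norm_single, EuclideanSpace.norm_single,
              Real.norm_eq_abs, Real.norm_eq_abs]
    · have t1 : Tendsto (fun s : ℝ => |s|) (𝓝 0) (𝓝 0) := by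
        simpa using continuous_abs.tendsto (0:ℝ)
      have t2 : Tendsto (fun s : ℝ => |(s^4) ^ ((1:ℝ)/3)|) (𝓝 0) (𝓝 0) := by
        have := t1.comp hg
        simpa [Function.comp_def] using this
      have t3 := t1.add t2
      simp only [add_zero] at t3
      exact t3.mono_left nhdsWithin_le_nhds
  have hcont : Tendsto curvePt (𝓝[>] (0:ℝ)) (𝓝[≠] (0 : EuclideanSpace ℝ (Fin 2))) := by
    apply tendsto_nhdsWithin_of_tendsto_nhds_of_eventually_within
    · exact tendsto_zero_iff_norm_tendsto_zero.mpr hnorm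
    · filter_upwards [self_mem_nhdsWithin] with s hs
      intro h0
      have h0' : curvePt s 0 = 0 := by rw [h0]; rfl
      rw [curvePt_apply0] at h0'
      exact hs.ne' h0'
  have h2 := hcont.eventually h
  rcases h2.exists with ⟨s, hs⟩
  rw [fzero, fcurve (curvePt s) (by rw [curvePt_apply0, curvePt_apply1])] at hs
  exact lt_irrefl 0 hs

noncomputable def uDir : EuclideanSpace ℝ (Fin 2) := EuclideanSpace.single 1 (1:ℝ)

lemma eval0 (a t : ℝ) : (EuclideanSpace.single (1 : Fin 2) a + t • uDir) 0 = 0 := by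
  show EuclideanSpace.single (1 : Fin 2) a 0 + t * uDir 0 = 0
  simp [uDir, EuclideanSpace.single_apply]

lemma eval1 (a t : ℝ) : (EuclideanSpace.single (1 : Fin 2) a + t • uDir) 1 = a + t := by
  show EuclideanSpace.single (1 : Fin 2) a 1 + t * uDir 1 = a + t
  simp [uDir, EuclideanSpace.single_apply]

lemma fEx16_line (a t : ℝ) :
    fEx16 (EuclideanSpace.single (1 : Fin 2) a + t • uDir) = |a + t| ^ ((3:ℝ)/2) := by
  simp only [fEx16, eval0, eval1]
  norm_num [Real.zero_rpow]

lemma fEx16_single (a : ℝ) :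
    fEx16 (EuclideanSpace.single (1 : Fin 2) a) = |a| ^ ((3:ℝ)/2) := by
  simp only [fEx16, EuclideanSpace.single_apply]
  norm_num [Real.zero_rpow]

lemma dini_eq_coe (y : EuclideanSpace ℝ (Fin 2)) (r : ℝ)
    (h : Tendsto (fun t : ℝ => t⁻¹ * (fEx16 (y + t • uDir) - fEx16 y)) (𝓝[>] (0:ℝ)) (𝓝 r)) :
    diniLower (fun z => ((fEx16 z : ℝ) : EReal)) y uDir = (r : EReal) := by
  have heq : (fun t : ℝ => ((t⁻¹ : ℝ) : EReal) *
      (((fEx16 (y + t • uDir) : ℝ) : EReal) - ((fEx16 y : ℝ) : EReal)))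
      = fun t : ℝ => ((t⁻¹ * (fEx16 (y + t • uDir) - fEx16 y) : ℝ) : EReal) := by
    funext t
    rw [EReal.coe_mul, EReal.coe_sub]
  rw [diniLower, heq]
  exact Filter.Tendsto.liminf_eq ((continuous_coe_real_ereal.tendsto r).comp h)

lemma dini_pos (a : ℝ) (ha : 0 < a) :
    diniLower (fun z => ((fEx16 z : ℝ) : EReal)) (EuclideanSpace.single (1 : Fin 2) a) uDir
      = (((3:ℝ)/2 * a ^ ((1:ℝ)/2) : ℝ) : EReal) := by
  apply dini_eq_coe
  have hd : HasDerivAt (fun x : ℝ => x ^ ((3:ℝ)/2)) ((3:ℝ)/2 * a ^ ((3:ℝ)/2 - 1)) a :=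
    Real.hasDerivAt_rpow_const (Or.inl (ne_of_gt ha))
  have hslope := hasDerivAt_iff_tendsto_slope.mp hd
  have hmap : Tendsto (fun t : ℝ => a + t) (𝓝[>] (0:ℝ)) (𝓝[≠] a) := by
    apply tendsto_nhdsWithin_of_tendsto_nhds_of_eventually_within
    · have h : Tendsto (fun t : ℝ => a + t) (𝓝 (0:ℝ)) (𝓝 a) := by
        have h0 : Continuous (fun t : ℝ => a + t) := continuous_const.add continuous_id
        have := h0.tendsto (0:ℝ)
        simpa using this
      exact h.mono_left nhdsWithin_le_nhds
    · filter_upwards [self_mem_nhdsWithin] with t ht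
      have ht' : (0:ℝ) < t := ht
      simp only [Set.mem_compl_iff, Set.mem_singleton_iff]
      intro hcon
      have : t = 0 := by linarith [hcon]
      exact ht'.ne' this
  have hcomp := hslope.comp hmap
  have hex : (3:ℝ)/2 * a ^ ((3:ℝ)/2 - 1) = (3:ℝ)/2 * a ^ ((1:ℝ)/2) := by norm_num
  rw [hex] at hcomp
  apply hcomp.congr'
  filter_upwards [self_mem_nhdsWithin] with t ht
  have ht' : (0:ℝ) < t := ht
  have hat : 0 < a + t := by linarith
  simp only [Function.comp_apply, slope_def_field, fEx16_line, fEx16_single]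
  rw [abs_of_pos hat, abs_of_pos ha]
  field_simp
  rw [add_sub_cancel_left, mul_div_cancel_left₀ _ ht'.ne']

lemma dini_zero :
    diniLower (fun z => ((fEx16 z : ℝ) : EReal)) 0 uDir = ((0 : ℝ) : EReal) := by
  apply dini_eq_coe
  have key : ∀ t : ℝ, 0 < t → t⁻¹ * (fEx16 (0 + t • uDir) - fEx16 0) = t ^ ((1:ℝ)/2) := by
    intro t ht
    have h1 : (0 : EuclideanSpace ℝ (Fin 2)) + t • uDir
        = EuclideanSpace.single (1 : Fin 2) 0 + t • uDir := by
      congr 1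
      ext i
      simp [EuclideanSpace.single_apply]
    rw [h1, fEx16_line, fzero, zero_add, sub_zero, abs_of_pos ht]
    rw [show t ^ ((3:ℝ)/2) = t ^ ((1:ℝ)/2 + 1) by norm_num,
      Real.rpow_add ht, Real.rpow_one]
    field_simp
  have htend : Tendsto (fun t : ℝ => t ^ ((1:ℝ)/2)) (𝓝[>] (0:ℝ)) (𝓝 0) := by
    have hc : ContinuousAt (fun t : ℝ => t ^ ((1:ℝ)/2)) 0 :=
      Real.continuousAt_rpow_const 0 _ (Or.inr (by norm_num))
    have := hc.tendsto
    rw [Real.zero_rpow (by norm_num : ((1:ℝ)/2) ≠ 0)] at this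
    exact this.mono_left nhdsWithin_le_nhds
  apply htend.congr'
  filter_upwards [self_mem_nhdsWithin] with t ht
  exact (key t ht).symm

lemma notell : ¬ IsEllStable (fun y => ((fEx16 y : ℝ) : EReal)) 0 := by
  rintro ⟨U, hU, K, hK, H⟩
  obtain ⟨ε, hε, hball⟩ := Metric.mem_nhds_iff.mp hU
  set a : ℝ := min (ε/2) (1/(1+K)^2) with ha_def
  have ha : 0 < a := lt_min (by linarith) (by positivity)
  have haε : a < ε := lt_of_le_of_lt (min_le_left _ _) (by linarith)
  set y : EuclideanSpace ℝ (Fin 2) := EuclideanSpace.single (1 : Fin 2) a with hy_def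
  have hyU : y ∈ U := by
    apply hball
    rw [Metric.mem_ball, dist_zero_right, EuclideanSpace.norm_single, Real.norm_eq_abs,
      abs_of_pos ha]
    exact haε
  have hyn : ‖y - 0‖ = a := by
    rw [sub_zero, EuclideanSpace.norm_single, Real.norm_eq_abs, abs_of_pos ha]
  have hun : ‖uDir‖ = 1 := by
    rw [uDir, EuclideanSpace.norm_single, Real.norm_eq_abs]; norm_num
  have h := (H y hyU (EReal.coe_ne_top _) uDir).1
  rw [dini_pos a ha, dini_zero, hyn, hun, ← EReal.coe_sub, EReal.coe_le_coe_iff] at h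
  -- h : 3/2 * a^(1/2) - 0 ≤ K * a * 1
  set b : ℝ := a ^ ((1:ℝ)/2) with hb_def
  have hb : 0 < b := Real.rpow_pos_of_pos ha _
  have hb2 : b ^ 2 = a := by
    rw [hb_def, ← Real.rpow_natCast (a ^ ((1:ℝ)/2)) 2, ← Real.rpow_mul ha.le]
    norm_num
  have hble : b ≤ 1/(1+K) := by
    have h1 : a ≤ 1/(1+K)^2 := min_le_right _ _
    calc b = a ^ ((1:ℝ)/2) := rfl
      _ ≤ (1/(1+K)^2) ^ ((1:ℝ)/2) := Real.rpow_le_rpow ha.le h1 (by norm_num)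
      _ = 1/(1+K) := by
        rw [show (1/(1+K)^2 : ℝ) = ((1/(1+K))^2 : ℝ) by rw [div_pow, one_pow],
          ← Real.rpow_natCast (1/(1+K)) 2, ← Real.rpow_mul (by positivity),
          show (((2:ℕ):ℝ) * ((1:ℝ)/2)) = 1 by norm_num, Real.rpow_one]
  have hKb : K * b < 3/2 := by
    have h2 : K * b ≤ K * (1/(1+K)) := mul_le_mul_of_nonneg_left hble hK.le
    have h3 : K * (1/(1+K)) < 1 := by
      rw [mul_one_div, div_lt_one (by linarith)]
      linarith
    linarith
  rw [sub_zero, mul_one, ← hb2] at h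
  nlinarith

/-- `(0,0)` is a global minimizer of `fEx16` with `∇fEx16 (0,0) = 0`; for
every unit vector `v` one has `fEx16 (t v) > C t²` on some interval `(0, δ)`; yet `(0,0)`
is not a strict local minimizer (`fEx16` vanishes along `x₂ = x₁^(4/3)`), and `fEx16` is
not `ℓ`-stable at `(0,0)`. -/
theorem stmt_16 :
    (∀ x : EuclideanSpace ℝ (Fin 2), fEx16 0 ≤ fEx16 x) ∧
      fderiv ℝ fEx16 0 = 0 ∧
      (∀ v : EuclideanSpace ℝ (Fin 2), ‖v‖ = 1 →
        ∃ δ > (0 : ℝ), ∃ C > (0 : ℝ), ∀ t : ℝ, 0 < t → t < δ → C * t ^ 2 < fEx16 (t • v)) ∧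
      (∀ x : EuclideanSpace ℝ (Fin 2), x 1 = ((x 0) ^ 4) ^ ((1 : ℝ) / 3) → fEx16 x = 0) ∧
      ¬ (∀ᶠ x in 𝓝[≠] (0 : EuclideanSpace ℝ (Fin 2)), fEx16 0 < fEx16 x) ∧
      ¬ IsEllStable (fun y => ((fEx16 y : ℝ) : EReal)) 0 := by
  refine ⟨fun x => ?_, fderiv_zero_ex16, fgrowth, fcurve, notstrict, notell⟩
  rw [fzero]
  exact fnonneg x
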